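/- If (m1, m2) and (n1, n2) are two locally uniformly compactly supported classical solutions of the synchronization system with the same initial data, i.e. m1(0,x) = n1(0,x) and m2(0,x) = n2(0,x) for all x ∈ ℝ, then m1 = n1 and m2 = n2 on [0,∞) × ℝ. -/

import Mathlib

lemma char_deriv {f : ℝ → ℝ → ℝ}
    (hf : ContDiffOn ℝ 1 (fun p : ℝ × ℝ => f p.1 p.2) (Set.Ici 0 ×ˢ Set.univ))
    (v : ℝ) {s : ℝ} (hs : 0 < s) (y : ℝ) :
    HasDerivAt (fun τ => f τ (y + v * τ))
      (deriv (fun τ => f τ (y + v * s)) s + v * deriv (fun z => f s z) (y + v * s)) s := by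
  set c : ℝ := y + v * s with hc
  have hmem : Set.Ici (0:ℝ) ×ˢ (Set.univ : Set ℝ) ∈ nhds ((s, c) : ℝ × ℝ) := by
    rw [mem_nhds_iff]
    exact ⟨Set.Ioi 0 ×ˢ Set.univ, Set.prod_mono Set.Ioi_subset_Ici_self le_rfl,
      (isOpen_Ioi.prod isOpen_univ), by simpa using hs⟩
  have hCA : ContDiffAt ℝ 1 (fun p : ℝ × ℝ => f p.1 p.2) (s, c) := hf.contDiffAt hmem
  have hD : DifferentiableAt ℝ (fun p : ℝ × ℝ => f p.1 p.2) (s, c) :=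
    hCA.differentiableAt one_ne_zero
  set L := fderiv ℝ (fun p : ℝ × ℝ => f p.1 p.2) (s, c) with hLdef
  have hL : HasFDerivAt (fun p : ℝ × ℝ => f p.1 p.2) L (s, c) := hD.hasFDerivAt
  -- partial derivatives
  have hcurve_t : HasDerivAt (fun τ : ℝ => ((τ, c) : ℝ × ℝ)) ((1, 0) : ℝ × ℝ) s :=
    (hasDerivAt_id s).prodMk (hasDerivAt_const s c)
  have hpt : deriv (fun τ => f τ c) s = L (1, 0) :=
    by exact (hL.comp_hasDerivAt s hcurve_t).deriv
  have hcurve_x : HasDerivAt (fun z : ℝ => ((s, z) : ℝ × ℝ)) ((0, 1) : ℝ × ℝ) c :=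
    (hasDerivAt_const c s).prodMk (hasDerivAt_id c)
  have hpx : deriv (fun z => f s z) c = L (0, 1) :=
    (hL.comp_hasDerivAt c hcurve_x).deriv
  -- characteristic curve
  have hlin : HasDerivAt (fun τ : ℝ => y + v * τ) v s := by
    simpa using ((hasDerivAt_id s).const_mul v).const_add y
  have hγ : HasDerivAt (fun τ : ℝ => ((τ, y + v * τ) : ℝ × ℝ)) ((1, v) : ℝ × ℝ) s :=
    (hasDerivAt_id s).prodMk hlin
  have hcomp : HasDerivAt (fun τ => f τ (y + v * τ)) (L (1, v)) s := by
    have hL2 : HasFDerivAt (fun p : ℝ × ℝ => f p.1 p.2) L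
        ((fun τ : ℝ => ((τ, y + v * τ) : ℝ × ℝ)) s) := by simpa [hc] using hL
    exact hL2.comp_hasDerivAt s hγ
  have hval : L (1, v) = deriv (fun τ => f τ c) s + v * deriv (fun z => f s z) c := by
    rw [hpt, hpx]
    have : ((1 : ℝ), v) = (1, 0) + v • ((0 : ℝ), (1 : ℝ)) := by simp
    rw [this, L.map_add, L.map_smul, smul_eq_mul]
  rw [← hval]
  exact hcomp

lemma component_bound
    (α C A v T s z : ℝ) (hα : 0 < α) (hαC : 2 * α ≤ C) (hA : 0 ≤ A)
    (hs : 0 < s) (hsT : s ≤ T)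
    (p q r w : ℝ → ℝ → ℝ)
    (hp : ContDiffOn ℝ 1 (fun a : ℝ × ℝ => p a.1 a.2) (Set.Ici 0 ×ˢ Set.univ))
    (hq : ContDiffOn ℝ 1 (fun a : ℝ × ℝ => q a.1 a.2) (Set.Ici 0 ×ˢ Set.univ))
    (hr : ContDiffOn ℝ 1 (fun a : ℝ × ℝ => r a.1 a.2) (Set.Ici 0 ×ˢ Set.univ))
    (hw : ContDiffOn ℝ 1 (fun a : ℝ × ℝ => w a.1 a.2) (Set.Ici 0 ×ˢ Set.univ))
    (hpdep : ∀ τ : ℝ, 0 ≤ τ → ∀ x : ℝ,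
      deriv (fun σ => p σ x) τ + v * deriv (fun ξ => p τ ξ) x = α * (r τ x - p τ x))
    (hpdeq : ∀ τ : ℝ, 0 ≤ τ → ∀ x : ℝ,
      deriv (fun σ => q σ x) τ + v * deriv (fun ξ => q τ ξ) x = α * (w τ x - q τ x))
    (hinit : ∀ x : ℝ, p 0 x = q 0 x)
    (n : ℕ)
    (ih : ∀ τ x : ℝ, 0 ≤ τ → τ ≤ T →
      |p τ x - q τ x| ≤ A * (C * τ) ^ n / n.factorial ∧
      |r τ x - w τ x| ≤ A * (C * τ) ^ n / n.factorial) :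
    |p s z - q s z| ≤ A * (C * s) ^ (n + 1) / (n + 1).factorial := by
  have hC : 0 ≤ C := le_trans (by linarith) hαC
  set y : ℝ := z - v * s with hy
  set g : ℝ → ℝ := fun τ => p τ (y + v * τ) - q τ (y + v * τ) with hg
  set G : ℝ → ℝ := fun τ =>
    α * ((r τ (y + v * τ) - w τ (y + v * τ)) - (p τ (y + v * τ) - q τ (y + v * τ))) with hG
  have hchar : ∀ τ ∈ Set.Ioo 0 s, HasDerivAt g (G τ) τ := by
    intro τ hτ
    have h1 := char_deriv hp v hτ.1 y
    have h2 := char_deriv hq v hτ.1 y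
    rw [hpdep τ hτ.1.le (y + v * τ)] at h1
    rw [hpdeq τ hτ.1.le (y + v * τ)] at h2
    have := h1.sub h2
    convert this using 1 <;> first | rfl | (simp only [hG]; ring)
  -- continuity along the characteristic
  have hcurve : Continuous (fun τ : ℝ => ((τ, y + v * τ) : ℝ × ℝ)) := by fun_prop
  have hmaps : Set.MapsTo (fun τ : ℝ => ((τ, y + v * τ) : ℝ × ℝ)) (Set.Icc 0 s)
      (Set.Ici (0:ℝ) ×ˢ (Set.univ : Set ℝ)) := fun τ hτ => ⟨hτ.1, trivial⟩
  have cp := hp.continuousOn.comp hcurve.continuousOn hmaps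
  have cq := hq.continuousOn.comp hcurve.continuousOn hmaps
  have cr := hr.continuousOn.comp hcurve.continuousOn hmaps
  have cw := hw.continuousOn.comp hcurve.continuousOn hmaps
  have hgc : ContinuousOn g (Set.Icc 0 s) := cp.sub cq
  have hGc : ContinuousOn G (Set.Icc 0 s) := continuousOn_const.mul ((cr.sub cw).sub (cp.sub cq))
  have hGint : IntervalIntegrable G MeasureTheory.volume 0 s :=
    (hGc.mono (by rw [Set.uIcc_of_le hs.le])).intervalIntegrable
  have hftc : ∫ τ in (0:ℝ)..s, G τ = g s - g 0 :=
    intervalIntegral.integral_eq_sub_of_hasDeriv_right_of_le hs.le hgc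
      (fun τ hτ => (hchar τ hτ).hasDerivWithinAt) hGint
  have hg0 : g 0 = 0 := by simp [hg, hinit]
  have hgs : g s = p s z - q s z := by simp [hg, hy]
  -- bound the integrand
  set K : ℝ := 2 * α * A * C ^ n / (n.factorial : ℝ) with hK
  have hbound : ∀ τ ∈ Set.Icc (0:ℝ) s, |G τ| ≤ K * τ ^ n := by
    intro τ hτ
    obtain ⟨ih1, ih2⟩ := ih τ (y + v * τ) hτ.1 (le_trans hτ.2 hsT)
    calc |G τ| = α * |(r τ (y + v * τ) - w τ (y + v * τ)) -
          (p τ (y + v * τ) - q τ (y + v * τ))| := by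
          rw [hG]; rw [abs_mul, abs_of_pos hα]
      _ ≤ α * (|r τ (y + v * τ) - w τ (y + v * τ)| +
          |p τ (y + v * τ) - q τ (y + v * τ)|) := by
          gcongr; exact abs_sub _ _
      _ ≤ α * (A * (C * τ) ^ n / n.factorial + A * (C * τ) ^ n / n.factorial) := by
          gcongr
      _ = K * τ ^ n := by rw [hK, mul_pow]; ring
  have habs : |p s z - q s z| ≤ ∫ τ in (0:ℝ)..s, K * τ ^ n := by
    have h1 : |p s z - q s z| = ‖∫ τ in (0:ℝ)..s, G τ‖ := by
      rw [hftc, hg0, hgs, sub_zero, Real.norm_eq_abs]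
    rw [h1]
    refine le_trans (intervalIntegral.norm_integral_le_integral_norm hs.le) ?_
    refine intervalIntegral.integral_mono_on hs.le (hGint.norm) ?_ ?_
    · exact (Continuous.intervalIntegrable (by fun_prop) 0 s)
    · intro τ hτ; rw [Real.norm_eq_abs]; exact hbound τ hτ
  have hint : ∫ τ in (0:ℝ)..s, K * τ ^ n = K * (s ^ (n + 1) / (n + 1)) := by
    rw [intervalIntegral.integral_const_mul, integral_pow]
    norm_num
  refine le_trans habs ?_
  rw [hint]
  have base : 0 ≤ A * C ^ n * s ^ (n + 1) / ((n.factorial : ℝ) * (n + 1)) := by positivity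
  calc K * (s ^ (n + 1) / (n + 1))
      = (2 * α) * (A * C ^ n * s ^ (n + 1) / ((n.factorial : ℝ) * (n + 1))) := by
        have hnf : (n.factorial : ℝ) ≠ 0 := by positivity
        have hn1 : (n : ℝ) + 1 ≠ 0 := by positivity
        rw [hK]; field_simp
    _ ≤ C * (A * C ^ n * s ^ (n + 1) / ((n.factorial : ℝ) * (n + 1))) :=
        mul_le_mul_of_nonneg_right hαC base
    _ = A * (C * s) ^ (n + 1) / ((n + 1).factorial : ℝ) := by
        have hnf : (n.factorial : ℝ) ≠ 0 := by positivity
        have hn1 : (n : ℝ) + 1 ≠ 0 := by positivity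
        rw [Nat.factorial_succ, mul_pow]; push_cast; field_simp; ring


/-- Uniqueness: two locally uniformly compactly supported classical solutions of the
synchronization system with the same initial data coincide on `[0,∞) × ℝ`. -/
theorem stmt_11 (v1 v2 α12 α21 : ℝ) (h12 : 0 < α12) (h21 : 0 < α21)
    (m1 m2 n1 n2 : ℝ → ℝ → ℝ)
    (hm1 : ContDiffOn ℝ 1 (fun p : ℝ × ℝ => m1 p.1 p.2) (Set.Ici 0 ×ˢ Set.univ))
    (hm2 : ContDiffOn ℝ 1 (fun p : ℝ × ℝ => m2 p.1 p.2) (Set.Ici 0 ×ˢ Set.univ))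
    (hn1 : ContDiffOn ℝ 1 (fun p : ℝ × ℝ => n1 p.1 p.2) (Set.Ici 0 ×ˢ Set.univ))
    (hn2 : ContDiffOn ℝ 1 (fun p : ℝ × ℝ => n2 p.1 p.2) (Set.Ici 0 ×ˢ Set.univ))
    (hpdem1 : ∀ t : ℝ, 0 ≤ t → ∀ x : ℝ,
      deriv (fun s => m1 s x) t + v1 * deriv (fun y => m1 t y) x
        = α12 * (m2 t x - m1 t x))
    (hpdem2 : ∀ t : ℝ, 0 ≤ t → ∀ x : ℝ,
      deriv (fun s => m2 s x) t + v2 * deriv (fun y => m2 t y) x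
        = α21 * (m1 t x - m2 t x))
    (hpden1 : ∀ t : ℝ, 0 ≤ t → ∀ x : ℝ,
      deriv (fun s => n1 s x) t + v1 * deriv (fun y => n1 t y) x
        = α12 * (n2 t x - n1 t x))
    (hpden2 : ∀ t : ℝ, 0 ≤ t → ∀ x : ℝ,
      deriv (fun s => n2 s x) t + v2 * deriv (fun y => n2 t y) x
        = α21 * (n1 t x - n2 t x))
    (hsuppm : ∀ T : ℝ, 0 < T → ∃ R : ℝ, 0 < R ∧ ∀ t x : ℝ,
      0 ≤ t → t ≤ T → R ≤ |x| → m1 t x = 0 ∧ m2 t x = 0)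
    (hsuppn : ∀ T : ℝ, 0 < T → ∃ R : ℝ, 0 < R ∧ ∀ t x : ℝ,
      0 ≤ t → t ≤ T → R ≤ |x| → n1 t x = 0 ∧ n2 t x = 0)
    (hinit1 : ∀ x : ℝ, m1 0 x = n1 0 x)
    (hinit2 : ∀ x : ℝ, m2 0 x = n2 0 x) :
    ∀ t : ℝ, 0 ≤ t → ∀ x : ℝ, m1 t x = n1 t x ∧ m2 t x = n2 t x := by
  intro t ht x
  set T : ℝ := t + 1 with hT
  have hT0 : 0 < T := by positivity
  have htT : t ≤ T := by simp [hT]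
  obtain ⟨Rm, hRm0, hRm⟩ := hsuppm T hT0
  obtain ⟨Rn, hRn0, hRn⟩ := hsuppn T hT0
  set R : ℝ := max Rm Rn with hRdef
  -- a uniform bound on the differences on [0,T] × ℝ
  set K : Set (ℝ × ℝ) := Set.Icc 0 T ×ˢ Set.Icc (-R) R with hKdef
  have hKc : IsCompact K := (isCompact_Icc).prod isCompact_Icc
  have hKsub : K ⊆ Set.Ici (0:ℝ) ×ˢ (Set.univ : Set ℝ) := by
    rintro ⟨a, b⟩ ⟨ha, _⟩; exact ⟨ha.1, trivial⟩
  have hu1c : ContinuousOn (fun p : ℝ × ℝ => m1 p.1 p.2 - n1 p.1 p.2) K :=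
    (hm1.continuousOn.sub hn1.continuousOn).mono hKsub
  have hu2c : ContinuousOn (fun p : ℝ × ℝ => m2 p.1 p.2 - n2 p.1 p.2) K :=
    (hm2.continuousOn.sub hn2.continuousOn).mono hKsub
  obtain ⟨A1, hA1⟩ := hKc.exists_bound_of_continuousOn hu1c
  obtain ⟨A2, hA2⟩ := hKc.exists_bound_of_continuousOn hu2c
  set A : ℝ := max (max A1 A2) 0 with hAdef
  have hA0 : 0 ≤ A := le_max_right _ _
  have hA : ∀ s z : ℝ, 0 ≤ s → s ≤ T →
      |m1 s z - n1 s z| ≤ A ∧ |m2 s z - n2 s z| ≤ A := by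
    intro s z hs hsT
    rcases le_total |z| R with hz | hz
    · have hzK : ((s, z) : ℝ × ℝ) ∈ K := ⟨⟨hs, hsT⟩, abs_le.mp hz⟩
      constructor
      · exact le_trans (hA1 _ hzK) (le_trans (le_max_left _ _) (le_max_left _ _))
      · exact le_trans (hA2 _ hzK) (le_trans (le_max_right _ _) (le_max_left _ _))
    · have hm := hRm s z hs hsT (le_trans (le_max_left _ _) hz)
      have hn := hRn s z hs hsT (le_trans (le_max_right _ _) hz)
      rw [hm.1, hm.2, hn.1, hn.2]
      simpa using hA0
  set C : ℝ := 2 * (α12 + α21) with hCdef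
  have h12C : 2 * α12 ≤ C := by simp [hCdef]; positivity
  have h21C : 2 * α21 ≤ C := by simp [hCdef]; positivity
  -- the key estimate, by induction
  have key : ∀ n : ℕ, ∀ s z : ℝ, 0 ≤ s → s ≤ T →
      |m1 s z - n1 s z| ≤ A * (C * s) ^ n / n.factorial ∧
      |m2 s z - n2 s z| ≤ A * (C * s) ^ n / n.factorial := by
    intro n
    induction n with
    | zero => intro s z hs hsT; simpa using hA s z hs hsT
    | succ n ihn =>
      intro s z hs hsT
      rcases eq_or_lt_of_le hs with hs0 | hs0
      · constructor
        · rw [← hs0]; simp [hinit1]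
        · rw [← hs0]; simp [hinit2]
      · constructor
        · exact component_bound α12 C A v1 T s z h12 h12C hA0 hs0 hsT m1 n1 m2 n2
            hm1 hn1 hm2 hn2 hpdem1 hpden1 hinit1 n
            (fun τ x' hτ hτT => ihn τ x' hτ hτT)
        · refine component_bound α21 C A v2 T s z h21 h21C hA0 hs0 hsT m2 n2 m1 n1
            hm2 hn2 hm1 hn1 hpdem2 hpden2 hinit2 n ?_
          intro τ x' hτ hτT
          exact ⟨(ihn τ x' hτ hτT).2, (ihn τ x' hτ hτT).1⟩
  -- let n → ∞
  have htend : Filter.Tendsto (fun n : ℕ => A * (C * t) ^ n / n.factorial)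
      Filter.atTop (nhds 0) := by
    have := (FloorSemiring.tendsto_pow_div_factorial_atTop (C * t)).const_mul A
    simpa [mul_div_assoc] using this
  have h1 : |m1 t x - n1 t x| ≤ 0 :=
    ge_of_tendsto htend (Filter.Eventually.of_forall fun n => (key n t x ht htT).1)
  have h2 : |m2 t x - n2 t x| ≤ 0 :=
    ge_of_tendsto htend (Filter.Eventually.of_forall fun n => (key n t x ht htT).2)
  constructor
  · have := abs_nonpos_iff.mp h1; linarith [abs_nonneg (m1 t x - n1 t x)]
  · have := abs_nonpos_iff.mp h2; linarith [abs_nonneg (m2 t x - n2 t x)]
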